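/- For every natural number n, applying the operator (X + s D_q)^n to the constant polynomial 1 yields (X + s D_q)^n 1 = Σ_{ℓ=0}^{⌊n/2⌋} W(n,ℓ) · s^ℓ x^{n-2ℓ}, where W(n,ℓ) = (1-q)^{-ℓ} · Σ_{i=0}^{ℓ} C(n,i) · (-1)^{ℓ-i} · q^{C(ℓ-i,2)} · λ_q(n-2i, ℓ-i), with C(n,i) the ordinary binomial coefficient and C(ℓ-i,2) = (ℓ-i)(ℓ-i-1)/2. -/

import Mathlib

noncomputable section

/-- The field `ℚ(q,s)` of rational functions in two indeterminates. -/
abbrev F : Type := FractionRing (MvPolynomial (Fin 2) ℚ)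

/-- The indeterminate `q`. -/
def q : F := algebraMap (MvPolynomial (Fin 2) ℚ) F (MvPolynomial.X 0)

/-- The indeterminate `s`. -/
def s : F := algebraMap (MvPolynomial (Fin 2) ℚ) F (MvPolynomial.X 1)

/-- The q-integer `[n]_q = 1 + q + ⋯ + q^{n-1}`. -/
def qInt (n : ℕ) : F := ∑ i ∈ Finset.range n, q ^ i

/-- The q-factorial `[n]_q! = ∏_{k=1}^n [k]_q`. -/
def qFact (n : ℕ) : F := ∏ k ∈ Finset.range n, qInt (k + 1)

/-- The q-binomial coefficient `[n choose k]_q = [n]_q!/([k]_q! [n-k]_q!)`. -/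
def qBinom (n k : ℕ) : F := qFact n / (qFact k * qFact (n - k))

/-- The operator `X` of multiplication by `x` on `F[x]`. -/
def Xop : Module.End F (Polynomial F) := LinearMap.mulLeft F Polynomial.X

/-- Division by `x` (discarding the constant term), as a linear map. -/
def divXL : Polynomial F →ₗ[F] Polynomial F where
  toFun := Polynomial.divX
  map_add' p r := Polynomial.divX_add
  map_smul' a p := by
    ext n
    simp [Polynomial.coeff_divX, Polynomial.coeff_smul]

/-- The q-derivative `D_q f(x) = (f(qx) - f(x))/((q-1)x)`; it is the F-linear
operator on `F[x]` determined by `D_q x^n = [n]_q x^{n-1}`. -/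
def Dq : Module.End F (Polynomial F) :=
  (q - 1)⁻¹ •
    (divXL ∘ₗ
      ((Polynomial.aeval (Polynomial.C q * Polynomial.X)).toLinearMap - LinearMap.id))

/-- The polynomials `h_n(x,t) = Σ_j q^{j²} t^j [n]_q!/((1+q)⋯(1+q^j)·[j]_q!·[n-2j]_q!)
x^{n-2j}` (the parameter `t` will be specialized to `s` or `q²s`). -/
def h (t : F) (n : ℕ) : Polynomial F :=
  ∑ j ∈ Finset.range (n / 2 + 1),
    Polynomial.C (q ^ (j ^ 2) * t ^ j * qFact n /
        ((∏ i ∈ Finset.range j, (1 + q ^ (i + 1))) * qFact j * qFact (n - 2 * j))) *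
      Polynomial.X ^ (n - 2 * j)


/-- The q-Lucas coefficient `λ_q(n,k) = ([n]_q/[n-k]_q)·[n-k choose k]_q` for `n ≥ 1`,
with `λ_q(0,0) = 1`. -/
def lam (n k : ℕ) : F :=
  if n = 0 ∧ k = 0 then 1 else qInt n / qInt (n - k) * qBinom (n - k) k

/-- The q-Weyl coefficient
`W(n,ℓ) = (1-q)^{-ℓ} Σ_{i=0}^{ℓ} C(n,i) (-1)^{ℓ-i} q^{C(ℓ-i,2)} λ_q(n-2i, ℓ-i)`. -/
def W (n ℓ : ℕ) : F :=
  (1 - q)⁻¹ ^ ℓ *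
    ∑ i ∈ Finset.range (ℓ + 1),
      (n.choose i : F) * (-1) ^ (ℓ - i) * q ^ (ℓ - i).choose 2 * lam (n - 2 * i) (ℓ - i)

lemma alg_inj : Function.Injective (algebraMap (MvPolynomial (Fin 2) ℚ) F) :=
  IsFractionRing.injective _ _

lemma q_pow_ne_one {n : ℕ} (hn : n ≠ 0) : q ^ n ≠ 1 := by
  unfold q
  rw [← map_pow, ← map_one (algebraMap (MvPolynomial (Fin 2) ℚ) F)]
  intro h
  have h2 := congrArg MvPolynomial.constantCoeff (alg_inj h)
  simp [zero_pow hn] at h2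

lemma one_sub_q_pow_ne {n : ℕ} (hn : n ≠ 0) : (1 : F) - q ^ n ≠ 0 :=
  sub_ne_zero.mpr (Ne.symm (q_pow_ne_one hn))

lemma one_sub_q_ne : (1 : F) - q ≠ 0 := by
  have := one_sub_q_pow_ne (n := 1) one_ne_zero
  simpa using this

lemma qInt_eq (n : ℕ) : qInt n = (1 - q ^ n) / (1 - q) := by
  rw [eq_div_iff one_sub_q_ne]
  have := geom_sum_mul q n
  unfold qInt
  linear_combination -this

lemma qInt_ne_zero {n : ℕ} (hn : n ≠ 0) : qInt n ≠ 0 := by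
  rw [qInt_eq]
  exact div_ne_zero (one_sub_q_pow_ne hn) one_sub_q_ne

lemma qFact_ne_zero (n : ℕ) : qFact n ≠ 0 := by
  unfold qFact
  exact Finset.prod_ne_zero_iff.mpr fun k _ => qInt_ne_zero (Nat.succ_ne_zero k)

lemma qFact_succ (n : ℕ) : qFact (n + 1) = qFact n * qInt (n + 1) :=
  Finset.prod_range_succ _ _

lemma qFact_zero : qFact 0 = 1 := rfl
lemma qInt_zero : qInt 0 = 0 := rfl
lemma qInt_one : qInt 1 = 1 := by simp [qInt]
lemma qInt_two : qInt 2 = 1 + q := by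
  unfold qInt
  rw [Finset.sum_range_succ, Finset.sum_range_one]
  simp



lemma lam_zero (m : ℕ) : lam m 0 = 1 := by
  unfold lam qBinom
  rcases Nat.eq_zero_or_pos m with h | h
  · simp [h]
  · rw [if_neg (by omega)]
    simp only [Nat.sub_zero, qFact_zero, one_mul]
    rw [div_self (qInt_ne_zero (by omega)), div_self (qFact_ne_zero m), one_mul]

lemma lam_zero_zero : lam 0 0 = 1 := lam_zero 0

lemma qFact_one : qFact 1 = 1 := by
  rw [show (1:ℕ) = 0 + 1 from rfl, qFact_succ, qFact_zero, qInt_one, mul_one]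

lemma lam_two_one : lam 2 1 = 1 + q := by
  unfold lam qBinom
  rw [if_neg (by omega)]
  norm_num [qInt_one, qInt_two, qFact_one, qFact_zero]

-- numerator identity for star
lemma qil (a c : ℕ) :
    q ^ c * (qInt (a+2*c+3) * qInt (a+c+1) * qInt (a+2))
      + (1 - q ^ (a+2)) * (qInt (a+2*c+2) * qInt (a+c+1) * qInt (c+1)) =
    q ^ c * (qInt (a+2*c+2) * qInt (a+1) * qInt (a+2))
      + qInt (a+2*c+1) * qInt (c+1) * qInt (a+2) := by
  rw [qInt_eq (a+2*c+3), qInt_eq (a+2*c+2), qInt_eq (a+2*c+1), qInt_eq (a+c+1),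
      qInt_eq (a+2), qInt_eq (a+1), qInt_eq (c+1)]
  have h0 := one_sub_q_ne
  field_simp
  ring

lemma qil2 (c : ℕ) :
    q ^ (c+1) * (qInt (2*c+4) * qInt (c+1)) + (1 - q) * (qInt (2*c+3) * qInt (c+2) * qInt (c+1)) =
      qInt (2*c+2) * qInt (c+2) := by
  rw [qInt_eq (2*c+4), qInt_eq (2*c+3), qInt_eq (2*c+2), qInt_eq (c+2), qInt_eq (c+1)]
  have h0 := one_sub_q_ne
  field_simp
  ring


-- Δ = qFact c * qInt (c+1) * qFact a * qInt (a+1) * qInt (a+2)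
lemma lam1 (a c : ℕ) :
    qFact c * qInt (c+1) * qFact a * qInt (a+1) * qInt (a+2) * lam (a+2*c+3) (c+1) =
      qInt (a+2*c+3) * qInt (a+c+1) * qInt (a+2) * qFact (a+c) := by
  unfold lam qBinom
  rw [if_neg (by omega), show a+2*c+3 - (c+1) = a+c+2 by omega, show a+c+2 - (c+1) = a+1 by omega]
  rw [show a+c+2 = (a+c+1)+1 by omega, qFact_succ, show a+c+1 = (a+c)+1 by omega, qFact_succ,
      qFact_succ c, qFact_succ a]
  have h1 : qInt (a+c+2) ≠ 0 := qInt_ne_zero (by omega)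
  have h2 : qInt (a+c+1) ≠ 0 := qInt_ne_zero (by omega)
  have h3 : qInt (c+1) ≠ 0 := qInt_ne_zero (by omega)
  have h4 : qInt (a+1) ≠ 0 := qInt_ne_zero (by omega)
  have g1 := qFact_ne_zero a; have g2 := qFact_ne_zero c; have g3 := qFact_ne_zero (a+c)
  rw [show (a+c)+1+1 = a+c+2 by omega, show (a+c)+1 = a+c+1 by omega]
  field_simp

lemma lam2 (a c : ℕ) :
    qFact c * qInt (c+1) * qFact a * qInt (a+1) * qInt (a+2) * lam (a+2*c+2) (c+1) =
      qInt (a+2*c+2) * qInt (a+1) * qInt (a+2) * qFact (a+c) := by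
  unfold lam qBinom
  rw [if_neg (by omega), show a+2*c+2 - (c+1) = a+c+1 by omega, show a+c+1 - (c+1) = a by omega]
  rw [show a+c+1 = (a+c)+1 by omega, qFact_succ, qFact_succ c]
  have h2 : qInt ((a+c)+1) ≠ 0 := qInt_ne_zero (by omega)
  have h3 : qInt (c+1) ≠ 0 := qInt_ne_zero (by omega)
  have g1 := qFact_ne_zero a; have g2 := qFact_ne_zero c; have g3 := qFact_ne_zero (a+c)
  rw [show (a+c)+1 = a+c+1 by omega]
  field_simp

lemma lam3 (a c : ℕ) :
    qFact c * qInt (c+1) * qFact a * qInt (a+1) * qInt (a+2) * lam (a+2*c+1) c =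
      qInt (a+2*c+1) * qInt (c+1) * qInt (a+2) * qFact (a+c) := by
  unfold lam qBinom
  rw [if_neg (by omega), show a+2*c+1 - c = a+c+1 by omega, show a+c+1 - c = a+1 by omega]
  rw [show a+c+1 = (a+c)+1 by omega, qFact_succ, qFact_succ a]
  have h2 : qInt ((a+c)+1) ≠ 0 := qInt_ne_zero (by omega)
  have h4 : qInt (a+1) ≠ 0 := qInt_ne_zero (by omega)
  have g1 := qFact_ne_zero a; have g2 := qFact_ne_zero c; have g3 := qFact_ne_zero (a+c)
  rw [show (a+c)+1 = a+c+1 by omega]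
  field_simp

lemma lam4 (a c : ℕ) :
    qFact c * qInt (c+1) * qFact a * qInt (a+1) * qInt (a+2) * lam (a+2*c+2) c =
      qInt (a+2*c+2) * qInt (a+c+1) * qInt (c+1) * qFact (a+c) := by
  unfold lam qBinom
  rw [if_neg (by omega), show a+2*c+2 - c = a+c+2 by omega, show a+c+2 - c = a+2 by omega]
  rw [show a+c+2 = (a+c+1)+1 by omega, qFact_succ, show a+c+1 = (a+c)+1 by omega, qFact_succ,
      show a+2 = (a+1)+1 by omega, qFact_succ, qFact_succ a]
  have h1 : qInt (a+c+2) ≠ 0 := qInt_ne_zero (by omega)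
  have h2 : qInt (a+c+1) ≠ 0 := qInt_ne_zero (by omega)
  have h4 : qInt (a+1) ≠ 0 := qInt_ne_zero (by omega)
  have h5 : qInt (a+2) ≠ 0 := qInt_ne_zero (by omega)
  have g1 := qFact_ne_zero a; have g2 := qFact_ne_zero c; have g3 := qFact_ne_zero (a+c)
  rw [show (a+c)+1+1 = a+c+2 by omega, show (a+c)+1 = a+c+1 by omega, show (a+1)+1 = a+2 by omega]
  rw [div_mul_div_comm, mul_div_assoc']
  rw [div_eq_iff (by exact mul_ne_zero h1 (mul_ne_zero g2 (mul_ne_zero (mul_ne_zero g1 h4) h5)))]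
  ring

lemma star (a c : ℕ) :
    q ^ c * lam (a+2*c+3) (c+1) + (1 - q ^ (a+2)) * lam (a+2*c+2) c =
      q ^ c * lam (a+2*c+2) (c+1) + lam (a+2*c+1) c := by
  have hΔ : qFact c * qInt (c+1) * qFact a * qInt (a+1) * qInt (a+2) ≠ 0 := by
    have h3 : qInt (c+1) ≠ 0 := qInt_ne_zero (by omega)
    have h4 : qInt (a+1) ≠ 0 := qInt_ne_zero (by omega)
    have h5 : qInt (a+2) ≠ 0 := qInt_ne_zero (by omega)
    have g1 := qFact_ne_zero a; have g2 := qFact_ne_zero c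
    exact mul_ne_zero (mul_ne_zero (mul_ne_zero (mul_ne_zero g2 h3) g1) h4) h5
  apply mul_left_cancel₀ hΔ
  have l1 := lam1 a c; have l2 := lam2 a c; have l3 := lam3 a c; have l4 := lam4 a c
  have k := qil a c
  linear_combination q ^ c * l1 + (1 - q ^ (a+2)) * l4 - q ^ c * l2 - l3 + qFact (a+c) * k

-- Δ2 = qInt (c+2) * qInt (c+1)
lemma lam5 (c : ℕ) : qInt (c+2) * qInt (c+1) * lam (2*c+4) (c+2) =
    qInt (2*c+4) * qInt (c+1) := by
  unfold lam qBinom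
  rw [if_neg (by omega), show 2*c+4 - (c+2) = c+2 by omega, show c+2 - (c+2) = 0 by omega]
  have h1 : qInt (c+2) ≠ 0 := qInt_ne_zero (by omega)
  have g := qFact_ne_zero (c+2)
  rw [qFact_zero]
  field_simp

lemma lam6 (c : ℕ) : qInt (c+2) * qInt (c+1) * lam (2*c+3) (c+1) =
    qInt (2*c+3) * qInt (c+2) * qInt (c+1) := by
  unfold lam qBinom
  rw [if_neg (by omega), show 2*c+3 - (c+1) = c+2 by omega, show c+2 - (c+1) = 1 by omega]
  rw [show c+2 = (c+1)+1 by omega, qFact_succ, qFact_one]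
  have h1 : qInt ((c+1)+1) ≠ 0 := qInt_ne_zero (by omega)
  have g := qFact_ne_zero (c+1)
  rw [show (c+1)+1 = c+2 by omega]
  field_simp

lemma lam7 (c : ℕ) : qInt (c+2) * qInt (c+1) * lam (2*c+2) (c+1) =
    qInt (2*c+2) * qInt (c+2) := by
  unfold lam qBinom
  rw [if_neg (by omega), show 2*c+2 - (c+1) = c+1 by omega, show c+1 - (c+1) = 0 by omega]
  have h1 : qInt (c+1) ≠ 0 := qInt_ne_zero (by omega)
  have g := qFact_ne_zero (c+1)
  rw [qFact_zero]
  field_simp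

lemma star2 (c : ℕ) :
    q ^ (c+1) * lam (2*c+4) (c+2) + (1 - q) * lam (2*c+3) (c+1) = lam (2*c+2) (c+1) := by
  have h1 : qInt (c+2) ≠ 0 := qInt_ne_zero (by omega)
  have h2 : qInt (c+1) ≠ 0 := qInt_ne_zero (by omega)
  have hΔ : qInt (c+2) * qInt (c+1) ≠ 0 := mul_ne_zero h1 h2
  apply mul_left_cancel₀ hΔ
  have l5 := lam5 c; have l6 := lam6 c; have l7 := lam7 c
  have k := qil2 c
  linear_combination q ^ (c+1) * l5 + (1 - q) * l6 - l7 + k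


def Slam (n ℓ : ℕ) : F :=
  ∑ i ∈ Finset.range (ℓ + 1),
    (n.choose i : F) * (-1) ^ (ℓ - i) * q ^ (ℓ - i).choose 2 * lam (n - 2 * i) (ℓ - i)

lemma W_eq (n ℓ : ℕ) : W n ℓ = (1 - q)⁻¹ ^ ℓ * Slam n ℓ := rfl

lemma choose_two_succ (c : ℕ) : (c + 1).choose 2 = c.choose 2 + c := by
  rw [Nat.choose_succ_succ]
  simp [Nat.choose_one_right]
  omega

lemma Slam_split (n ℓ : ℕ) :
    Slam (n + 1) ℓ =
      (∑ i ∈ Finset.range (ℓ + 1),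
        (n.choose i : F) * (-1) ^ (ℓ - i) * q ^ (ℓ - i).choose 2 * lam (n + 1 - 2 * i) (ℓ - i))
      + ∑ i ∈ Finset.range ℓ,
        (n.choose i : F) * (-1) ^ (ℓ - (i+1)) * q ^ (ℓ - (i+1)).choose 2
          * lam (n + 1 - 2 * (i+1)) (ℓ - (i+1)) := by
  unfold Slam
  rw [Finset.sum_range_succ' (fun i => ((n+1).choose i : F) * (-1) ^ (ℓ - i) * q ^ (ℓ - i).choose 2
        * lam (n + 1 - 2 * i) (ℓ - i)) ℓ,
      Finset.sum_range_succ' (fun i => (n.choose i : F) * (-1) ^ (ℓ - i) * q ^ (ℓ - i).choose 2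
        * lam (n + 1 - 2 * i) (ℓ - i)) ℓ]
  have key : ∀ i ∈ Finset.range ℓ,
      (((n+1).choose (i+1) : F) * (-1) ^ (ℓ - (i+1)) * q ^ (ℓ - (i+1)).choose 2
          * lam (n + 1 - 2 * (i+1)) (ℓ - (i+1)))
      = ((n.choose (i+1) : F) * (-1) ^ (ℓ - (i+1)) * q ^ (ℓ - (i+1)).choose 2
          * lam (n + 1 - 2 * (i+1)) (ℓ - (i+1)))
        + ((n.choose i : F) * (-1) ^ (ℓ - (i+1)) * q ^ (ℓ - (i+1)).choose 2
          * lam (n + 1 - 2 * (i+1)) (ℓ - (i+1))) := by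
    intro i _
    rw [Nat.choose_succ_succ]
    push_cast
    ring
  rw [Finset.sum_congr rfl key, Finset.sum_add_distrib]
  simp only [Nat.choose_zero_right]
  ring

lemma Slam_rec1 (n ℓ : ℕ) (h : 2 * (ℓ + 1) ≤ n) :
    Slam (n + 1) (ℓ + 1) = Slam n (ℓ + 1) + (1 - q ^ (n - 2 * ℓ)) * Slam n ℓ := by
  rw [Slam_split]
  unfold Slam
  rw [Finset.mul_sum]
  rw [Finset.sum_range_succ (fun i => (n.choose i : F) * (-1) ^ (ℓ + 1 - i) * q ^ (ℓ + 1 - i).choose 2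
        * lam (n + 1 - 2 * i) (ℓ + 1 - i)) (ℓ+1),
      Finset.sum_range_succ (fun i => (n.choose i : F) * (-1) ^ (ℓ + 1 - i) * q ^ (ℓ + 1 - i).choose 2
        * lam (n - 2 * i) (ℓ + 1 - i)) (ℓ+1)]
  rw [show ℓ + 1 - (ℓ + 1) = 0 by omega]
  rw [lam_zero, lam_zero]
  have hsum : (∑ x ∈ Finset.range (ℓ + 1),
        (n.choose x : F) * (-1) ^ (ℓ + 1 - x) * q ^ (ℓ + 1 - x).choose 2 * lam (n + 1 - 2 * x) (ℓ + 1 - x))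
      + ∑ i ∈ Finset.range (ℓ + 1),
        (n.choose i : F) * (-1) ^ (ℓ + 1 - (i + 1)) * q ^ (ℓ + 1 - (i + 1)).choose 2 *
            lam (n + 1 - 2 * (i + 1)) (ℓ + 1 - (i + 1))
      = (∑ x ∈ Finset.range (ℓ + 1),
          (n.choose x : F) * (-1) ^ (ℓ + 1 - x) * q ^ (ℓ + 1 - x).choose 2 * lam (n - 2 * x) (ℓ + 1 - x))
        + ∑ i ∈ Finset.range (ℓ + 1),
          (1 - q ^ (n - 2 * ℓ)) * ((n.choose i : F) * (-1) ^ (ℓ - i) * q ^ (ℓ - i).choose 2 * lam (n - 2 * i) (ℓ - i)) := by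
    rw [← Finset.sum_add_distrib, ← Finset.sum_add_distrib]
    apply Finset.sum_congr rfl
    intro i hi
    have hi' : i ≤ ℓ := by simpa [Nat.lt_succ_iff] using hi
    obtain ⟨c, rfl⟩ : ∃ c, ℓ = i + c := ⟨ℓ - i, by omega⟩
    obtain ⟨a, ha⟩ : ∃ a, n = a + 2 * (i + c) + 2 := ⟨n - 2 * (i + c) - 2, by omega⟩
    subst ha
    rw [show i + c + 1 - i = c + 1 by omega, show i + c + 1 - (i + 1) = c by omega,
        show i + c - i = c by omega,
        show a + 2 * (i + c) + 2 + 1 - 2 * i = a + 2*c + 3 by omega,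
        show a + 2 * (i + c) + 2 + 1 - 2 * (i + 1) = a + 2*c + 1 by omega,
        show a + 2 * (i + c) + 2 - 2 * i = a + 2*c + 2 by omega,
        show a + 2 * (i + c) + 2 - 2 * (i + c) = a + 2 by omega,
        choose_two_succ c, pow_add, pow_add]
    have st := star a c
    linear_combination (((a + 2 * (i + c) + 2).choose i : F) * (-1:F)^(c+1) * q ^ c.choose 2) * st
  linear_combination hsum

lemma Slam_rec2 (m : ℕ) :
    Slam (2 * m + 2) (m + 1) = (1 - q) * Slam (2 * m + 1) m := by
  rw [show 2 * m + 2 = (2 * m + 1) + 1 by omega, Slam_split]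
  unfold Slam
  rw [Finset.mul_sum]
  rw [Finset.sum_range_succ (fun i => (((2*m+1).choose i : F)) * (-1) ^ (m + 1 - i) * q ^ (m + 1 - i).choose 2
        * lam (2*m + 1 + 1 - 2 * i) (m + 1 - i)) (m+1),
      Finset.sum_range_succ (fun i => (((2*m+1).choose i : F)) * (-1) ^ (m + 1 - i) * q ^ (m + 1 - i).choose 2
        * lam (2*m + 1 + 1 - 2 * i) (m + 1 - i)) m,
      Finset.sum_range_succ (fun i => (((2*m+1).choose i : F)) * (-1) ^ (m + 1 - (i+1)) * q ^ (m + 1 - (i+1)).choose 2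
        * lam (2*m + 1 + 1 - 2 * (i+1)) (m + 1 - (i+1))) m,
      Finset.sum_range_succ (fun i => (1 - q) * (((2*m+1).choose i : F) * (-1) ^ (m - i) * q ^ (m - i).choose 2
        * lam (2*m + 1 - 2 * i) (m - i))) m]
  have hbound : ((2*m+1).choose m : F) * (-1) ^ (m + 1 - m) * q ^ (m + 1 - m).choose 2
          * lam (2*m + 1 + 1 - 2 * m) (m + 1 - m)
      + ((2*m+1).choose (m+1) : F) * (-1) ^ (m + 1 - (m+1)) * q ^ (m + 1 - (m+1)).choose 2
          * lam (2*m + 1 + 1 - 2 * (m+1)) (m + 1 - (m+1))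
      + ((2*m+1).choose m : F) * (-1) ^ (m + 1 - (m+1)) * q ^ (m + 1 - (m+1)).choose 2
          * lam (2*m + 1 + 1 - 2 * (m+1)) (m + 1 - (m+1))
      = (1 - q) * (((2*m+1).choose m : F) * (-1) ^ (m - m) * q ^ (m - m).choose 2
          * lam (2*m + 1 - 2 * m) (m - m)) := by
    rw [show m + 1 - m = 1 by omega, show m + 1 - (m+1) = 0 by omega, show m - m = 0 by omega,
        show 2*m + 1 + 1 - 2 * m = 2 by omega, show 2*m + 1 + 1 - 2 * (m+1) = 0 by omega,
        show 2*m + 1 - 2 * m = 1 by omega]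
    have hc : (2*m+1).choose (m+1) = (2*m+1).choose m := by
      rw [← Nat.choose_symm (by omega), show 2*m+1 - (m+1) = m by omega]
    rw [hc, lam_two_one, lam_zero, lam_zero]
    norm_num
    ring
  have hsum : (∑ x ∈ Finset.range m,
        ((2*m+1).choose x : F) * (-1) ^ (m + 1 - x) * q ^ (m + 1 - x).choose 2 * lam (2*m + 1 + 1 - 2 * x) (m + 1 - x))
      + ∑ i ∈ Finset.range m,
        ((2*m+1).choose i : F) * (-1) ^ (m + 1 - (i + 1)) * q ^ (m + 1 - (i + 1)).choose 2 *
            lam (2*m + 1 + 1 - 2 * (i + 1)) (m + 1 - (i + 1))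
      = ∑ i ∈ Finset.range m,
          (1 - q) * (((2*m+1).choose i : F) * (-1) ^ (m - i) * q ^ (m - i).choose 2 * lam (2*m + 1 - 2 * i) (m - i)) := by
    rw [← Finset.sum_add_distrib]
    apply Finset.sum_congr rfl
    intro i hi
    have hi' : i < m := by simpa using hi
    obtain ⟨c, rfl⟩ : ∃ c, m = i + c + 1 := ⟨m - i - 1, by omega⟩
    rw [show i + c + 1 + 1 - i = c + 2 by omega, show i + c + 1 + 1 - (i + 1) = c + 1 by omega,
        show i + c + 1 - i = c + 1 by omega,
        show 2 * (i + c + 1) + 1 + 1 - 2 * i = 2*c + 4 by omega,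
        show 2 * (i + c + 1) + 1 + 1 - 2 * (i + 1) = 2*c + 2 by omega,
        show 2 * (i + c + 1) + 1 - 2 * i = 2*c + 3 by omega,
        show (c+2) = (c+1)+1 from rfl, choose_two_succ (c+1), pow_add, pow_add]
    have st := star2 c
    linear_combination (((2 * (i + c + 1) + 1).choose i : F) * (-1:F)^(c+1+1) * q ^ (c+1).choose 2) * st
  linear_combination hsum + hbound




lemma W_zero (n : ℕ) : W n 0 = 1 := by
  rw [W_eq]
  unfold Slam
  simp [lam_zero]

lemma W_rec1 (n ℓ : ℕ) (h : 2 * (ℓ + 1) ≤ n) :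
    W (n + 1) (ℓ + 1) = W n (ℓ + 1) + qInt (n - 2 * ℓ) * W n ℓ := by
  rw [W_eq, W_eq, W_eq, Slam_rec1 n ℓ h, qInt_eq]
  have h0 := one_sub_q_ne
  field_simp
  linear_combination ((1 - q)⁻¹ ^ ℓ * Slam n ℓ * (1 - q ^ (n - 2 * ℓ))) * mul_inv_cancel₀ h0

lemma W_rec2 (m : ℕ) : W (2 * m + 2) (m + 1) = W (2 * m + 1) m := by
  rw [W_eq, W_eq, Slam_rec2 m]
  have h0 := one_sub_q_ne
  field_simp
  linear_combination ((1 - q)⁻¹ ^ m * Slam (2 * m + 1) m) * mul_inv_cancel₀ h0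

lemma q_ne_one : q ≠ 1 := by
  intro h
  exact one_sub_q_ne (by rw [h]; ring)

lemma Dq_pow (e : ℕ) : Dq (Polynomial.X ^ e : Polynomial F)
    = Polynomial.C (qInt e) * Polynomial.X ^ (e - 1) := by
  have hq : q - 1 ≠ 0 := sub_ne_zero.mpr q_ne_one
  unfold Dq
  rw [LinearMap.smul_apply, LinearMap.comp_apply, LinearMap.sub_apply,
    AlgHom.toLinearMap_apply, LinearMap.id_apply]
  have ha : (Polynomial.aeval (Polynomial.C q * Polynomial.X)) (Polynomial.X ^ e : Polynomial F)
      = Polynomial.C (q ^ e) * Polynomial.X ^ e := by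
    rw [map_pow, Polynomial.aeval_X, mul_pow, ← Polynomial.C_pow]
  rw [ha]
  have hd : divXL (Polynomial.C (q ^ e) * Polynomial.X ^ e - Polynomial.X ^ e)
      = Polynomial.C (q ^ e - 1) * Polynomial.X ^ (e - 1) := by
    show Polynomial.divX _ = _
    have he : Polynomial.C (q ^ e) * Polynomial.X ^ e - Polynomial.X ^ e
        = Polynomial.C (q ^ e - 1) * Polynomial.X ^ e := by
      rw [Polynomial.C_sub, Polynomial.C_1]; ring
    rw [he, Polynomial.divX_C_mul, Polynomial.divX_X_pow]
    rcases e with _ | e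
    · simp
    · simp
  rw [hd, Polynomial.smul_eq_C_mul, ← mul_assoc, ← Polynomial.C_mul]
  congr 2
  rw [qInt_eq]
  have h0 := one_sub_q_ne
  field_simp
  ring

lemma Dq_monomial (a : F) (e : ℕ) :
    Dq (Polynomial.C a * Polynomial.X ^ e) = Polynomial.C (qInt e * a) * Polynomial.X ^ (e - 1) := by
  rw [← Polynomial.smul_eq_C_mul, map_smul, Dq_pow, Polynomial.smul_eq_C_mul,
      ← mul_assoc, ← Polynomial.C_mul, mul_comm a]

lemma op_monomial (a : F) (e : ℕ) :
    (Xop + s • Dq) (Polynomial.C a * Polynomial.X ^ e) =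
      Polynomial.C a * Polynomial.X ^ (e + 1)
        + Polynomial.C (qInt e * a * s) * Polynomial.X ^ (e - 1) := by
  rw [LinearMap.add_apply, LinearMap.smul_apply, Dq_monomial]
  unfold Xop
  rw [LinearMap.mulLeft_apply]
  rw [Polynomial.smul_eq_C_mul]
  simp only [Polynomial.C_mul]
  ring


lemma key_sum (n : ℕ) :
    (∑ ℓ ∈ Finset.range (n / 2 + 1),
        (Polynomial.C (W n ℓ * s ^ ℓ) * Polynomial.X ^ (n - 2 * ℓ + 1)
          + Polynomial.C (qInt (n - 2 * ℓ) * (W n ℓ * s ^ ℓ) * s) * Polynomial.X ^ (n - 2 * ℓ - 1)))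
    = ∑ ℓ ∈ Finset.range ((n + 1) / 2 + 1),
        Polynomial.C (W (n + 1) ℓ * s ^ ℓ) * Polynomial.X ^ (n + 1 - 2 * ℓ) := by
  rw [Finset.sum_add_distrib]
  rcases Nat.even_or_odd n with ⟨m, hm⟩ | ⟨m, hm⟩
  · -- n = 2m
    subst hm
    have h2 : (m + m) / 2 = m := by omega
    have h3 : (m + m + 1) / 2 = m := by omega
    rw [h2, h3]
    -- peel ℓ = m from second sum (it vanishes), ℓ = 0 from first and RHS
    rw [Finset.sum_range_succ (fun ℓ => Polynomial.C (qInt (m + m - 2 * ℓ) * (W (m+m) ℓ * s ^ ℓ) * s)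
          * Polynomial.X ^ (m + m - 2 * ℓ - 1)) m]
    rw [show m + m - 2 * m = 0 by omega, qInt_zero]
    rw [Finset.sum_range_succ' (fun ℓ => Polynomial.C (W (m+m) ℓ * s ^ ℓ)
          * Polynomial.X ^ (m + m - 2 * ℓ + 1)) m]
    rw [Finset.sum_range_succ' (fun ℓ => Polynomial.C (W (m+m+1) ℓ * s ^ ℓ)
          * Polynomial.X ^ (m + m + 1 - 2 * ℓ)) m]
    simp only [Nat.mul_zero, Nat.sub_zero, pow_zero, mul_one, W_zero, zero_mul, map_zero]
    have hsum : (∑ k ∈ Finset.range m,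
          Polynomial.C (W (m + m) (k + 1) * s ^ (k + 1)) * Polynomial.X ^ (m + m - 2 * (k + 1) + 1))
        + (∑ x ∈ Finset.range m,
          Polynomial.C (qInt (m + m - 2 * x) * (W (m + m) x * s ^ x) * s) * Polynomial.X ^ (m + m - 2 * x - 1))
        = ∑ k ∈ Finset.range m,
          Polynomial.C (W (m + m + 1) (k + 1) * s ^ (k + 1)) * Polynomial.X ^ (m + m + 1 - 2 * (k + 1)) := by
      rw [← Finset.sum_add_distrib]
      apply Finset.sum_congr rfl
      intro k hk
      have hk' : k < m := by simpa using hk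
      rw [show m + m - 2 * (k + 1) + 1 = m + m - 2 * k - 1 by omega,
          show m + m + 1 - 2 * (k + 1) = m + m - 2 * k - 1 by omega,
          W_rec1 (m + m) k (by omega)]
      simp only [Polynomial.C_add, Polynomial.C_mul, Polynomial.C_pow]
      ring
    linear_combination hsum
  · -- n = 2m+1
    subst hm
    have h2 : (2 * m + 1) / 2 = m := by omega
    have h3 : (2 * m + 1 + 1) / 2 = m + 1 := by omega
    rw [h2, h3]
    rw [Finset.sum_range_succ' (fun ℓ => Polynomial.C (W (2*m+1) ℓ * s ^ ℓ)
          * Polynomial.X ^ (2*m+1 - 2 * ℓ + 1)) m]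
    rw [Finset.sum_range_succ' (fun ℓ => Polynomial.C (W (2*m+1+1) ℓ * s ^ ℓ)
          * Polynomial.X ^ (2*m+1+1 - 2 * ℓ)) (m+1)]
    rw [Finset.sum_range_succ (fun ℓ => Polynomial.C (qInt (2*m+1 - 2 * ℓ) * (W (2*m+1) ℓ * s ^ ℓ) * s)
          * Polynomial.X ^ (2*m+1 - 2 * ℓ - 1)) m]
    rw [Finset.sum_range_succ (fun k => Polynomial.C (W (2*m+1+1) (k+1) * s ^ (k+1))
          * Polynomial.X ^ (2*m+1+1 - 2 * (k+1))) m]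
    have hbound : Polynomial.C (qInt (2*m+1 - 2 * m) * (W (2*m+1) m * s ^ m) * s)
            * Polynomial.X ^ (2*m+1 - 2 * m - 1)
        = Polynomial.C (W (2*m+1+1) (m+1) * s ^ (m+1)) * Polynomial.X ^ (2*m+1+1 - 2 * (m+1)) := by
      rw [show 2*m+1 - 2*m = 1 by omega, show 2*m+1+1 - 2*(m+1) = 0 by omega, qInt_one,
          show 2*m+1+1 = 2*m+2 by omega, W_rec2 m]
      simp only [Nat.sub_self, pow_zero, Polynomial.C_mul, Polynomial.C_pow, one_mul, mul_one]
      ring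
    have hsum : (∑ k ∈ Finset.range m,
          Polynomial.C (W (2*m+1) (k + 1) * s ^ (k + 1)) * Polynomial.X ^ (2*m+1 - 2 * (k + 1) + 1))
        + (∑ x ∈ Finset.range m,
          Polynomial.C (qInt (2*m+1 - 2 * x) * (W (2*m+1) x * s ^ x) * s) * Polynomial.X ^ (2*m+1 - 2 * x - 1))
        = ∑ k ∈ Finset.range m,
          Polynomial.C (W (2*m+1+1) (k + 1) * s ^ (k + 1)) * Polynomial.X ^ (2*m+1+1 - 2 * (k + 1)) := by
      rw [← Finset.sum_add_distrib]
      apply Finset.sum_congr rfl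
      intro k hk
      have hk' : k < m := by simpa using hk
      rw [show 2*m+1 - 2 * (k + 1) + 1 = 2*m - 2*k by omega,
          show 2*m+1 - 2*k - 1 = 2*m - 2*k by omega,
          show 2*m+1+1 - 2 * (k + 1) = 2*m - 2*k by omega,
          W_rec1 (2*m+1) k (by omega)]
      rw [show 2*m+1 - 2*k = 2*m - 2*k + 1 by omega]
      simp only [Polynomial.C_add, Polynomial.C_mul, Polynomial.C_pow]
      ring
    simp only [Nat.mul_zero, Nat.sub_zero, pow_zero, mul_one, W_zero]
    linear_combination hsum + hbound




/- STATEMENT 18: (X + s D_q)^n 1 = Σ_{ℓ=0}^{⌊n/2⌋} W(n,ℓ) s^ℓ x^{n-2ℓ}. -/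
theorem qHermite_apply_one (n : ℕ) :
    ((Xop + s • Dq) ^ n) (1 : Polynomial F) =
      ∑ ℓ ∈ Finset.range (n / 2 + 1),
        Polynomial.C (W n ℓ * s ^ ℓ) * Polynomial.X ^ (n - 2 * ℓ) := by
  induction n with
  | zero =>
    simp [W_zero]
  | succ n ih =>
    rw [pow_succ', Module.End.mul_apply, ih, map_sum]
    rw [Finset.sum_congr rfl (fun ℓ _ => op_monomial (W n ℓ * s ^ ℓ) (n - 2 * ℓ))]
    exact key_sum n

end
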